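/- If a family {μ_i} of probability measures on a countable group is both tight and entropy-tight, then the family of all n-fold convolutions {μ_{i_1} * ⋯ * μ_{i_n}} (for any fixed n, over all choices of indices) is also tight and entropy-tight. -/

import Mathlib

open Real
open scoped ENNReal

/-- A probability measure on a countable set, given by its mass function. -/
def IsProb {X : Type*} (μ : X → ℝ) : Prop := (∀ x, 0 ≤ μ x) ∧ HasSum μ 1

/-- A family of measures is tight if the masses outside a single finite set are
uniformly small. -/
def Tight {ι X : Type*} (μ : ι → X → ℝ) : Prop :=
  ∀ ε > (0 : ℝ), ∃ K : Finset X, ∀ i, (∑' x, ((↑K : Set X)ᶜ).indicator (μ i) x) < ε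

/-- A family of measures is entropy-tight if the entropy contributions outside a
single finite set are uniformly small. -/
def EntTight {ι X : Type*} (μ : ι → X → ℝ) : Prop :=
  ∀ ε > (0 : ℝ), ∃ K : Finset X, ∀ i,
    (∑' x, ((↑K : Set X)ᶜ).indicator (fun y => negMulLog (μ i y)) x) < ε

/-- Convolution of measures on a group. -/
noncomputable def conv {G : Type*} [Group G] (μ ν : G → ℝ) : G → ℝ :=
  fun z => ∑' x, μ x * ν (x⁻¹ * z)

/-- Convolution of a finite list of measures (empty list gives the point mass at 1). -/
noncomputable def convList {G : Type*} [Group G] [DecidableEq G] :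
    List (G → ℝ) → G → ℝ
  | [] => fun g => if g = 1 then 1 else 0
  | μ :: l => conv μ (convList l)


section aux
lemma IsProb.nonneg {G} {μ : G → ℝ} (h : IsProb μ) (x : G) : 0 ≤ μ x := h.1 x
lemma IsProb.summable {G} {μ : G → ℝ} (h : IsProb μ) : Summable μ := h.2.summable
lemma IsProb.tsum_eq' {G} {μ : G → ℝ} (h : IsProb μ) : ∑' x, μ x = 1 := h.2.tsum_eq
lemma IsProb.le_one {G} {μ : G → ℝ} (h : IsProb μ) (x : G) : μ x ≤ 1 := by
  have := Summable.le_tsum h.summable x (fun y _ => h.1 y)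
  simpa [h.tsum_eq'] using this

section bridge
variable {G : Type*}

lemma ofReal_indicator (S : Set G) (f : G → ℝ) (x : G) :
    ENNReal.ofReal (S.indicator f x) = S.indicator (fun y => ENNReal.ofReal (f y)) x := by
  by_cases h : x ∈ S <;> simp [h]

/-- tsum of indicator in ENNReal equals ofReal of real tsum, for summable nonneg f -/
lemma tailE_eq {f : G → ℝ} (h0 : ∀ x, 0 ≤ f x) (hs : Summable f) (S : Set G) :
    ∑' x, S.indicator (fun y => ENNReal.ofReal (f y)) x
      = ENNReal.ofReal (∑' x, S.indicator f x) := by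
  rw [ENNReal.ofReal_tsum_of_nonneg (fun x => Set.indicator_apply_nonneg (fun _ => h0 x))
    (hs.indicator S)]
  exact tsum_congr fun x => (ofReal_indicator S f x).symm

lemma real_tail_lt {f : G → ℝ} (h0 : ∀ x, 0 ≤ f x) {S : Set G} {ε : ℝ}
    (h : ∑' x, S.indicator (fun y => ENNReal.ofReal (f y)) x < ENNReal.ofReal ε) :
    ∑' x, S.indicator f x < ε := by
  set T := ∑' x, S.indicator (fun y => ENNReal.ofReal (f y)) x with hT
  have hne : T ≠ ⊤ := h.ne_top
  have hsum : Summable (fun x => S.indicator f x) := by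
    have := ENNReal.summable_toReal hne
    refine this.congr fun x => ?_
    rw [← ofReal_indicator, ENNReal.toReal_ofReal (Set.indicator_apply_nonneg (fun _ => h0 x))]
  have heq : ∑' x, S.indicator f x = T.toReal := by
    rw [hT, ENNReal.tsum_toReal_eq (fun a => by
      rw [← ofReal_indicator]; exact ENNReal.ofReal_ne_top)]
    refine tsum_congr fun x => ?_
    rw [← ofReal_indicator, ENNReal.toReal_ofReal (Set.indicator_apply_nonneg (fun _ => h0 x))]
  rw [heq]
  exact (ENNReal.lt_ofReal_iff_toReal_lt hne).mp h

end bridge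

section convsec
variable {G : Type*} [Group G] [Countable G]

lemma summable_conv_term {μ ν : G → ℝ} (hμ : IsProb μ) (hν : IsProb ν) (z : G) :
    Summable (fun x => μ x * ν (x⁻¹ * z)) := by
  refine Summable.of_nonneg_of_le (fun x => mul_nonneg (hμ.1 x) (hν.1 _)) (fun x => ?_)
    hμ.summable
  calc μ x * ν (x⁻¹ * z) ≤ μ x * 1 := mul_le_mul_of_nonneg_left (hν.le_one _) (hμ.1 x)
    _ = μ x := mul_one _

lemma conv_nonneg' {μ ν : G → ℝ} (hμ : IsProb μ) (hν : IsProb ν) (z : G) :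
    0 ≤ conv μ ν z :=
  tsum_nonneg fun x => mul_nonneg (hμ.1 x) (hν.1 _)

lemma ofReal_conv {μ ν : G → ℝ} (hμ : IsProb μ) (hν : IsProb ν) (z : G) :
    ENNReal.ofReal (conv μ ν z)
      = ∑' x, ENNReal.ofReal (μ x) * ENNReal.ofReal (ν (x⁻¹ * z)) := by
  rw [conv, ENNReal.ofReal_tsum_of_nonneg (fun x => mul_nonneg (hμ.1 x) (hν.1 _))
    (summable_conv_term hμ hν z)]
  exact tsum_congr fun x => ENNReal.ofReal_mul (hμ.1 x)

lemma tsum_ofReal_eq_one {μ : G → ℝ} (hμ : IsProb μ) :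
    ∑' x, ENNReal.ofReal (μ x) = 1 := by
  rw [← ENNReal.ofReal_tsum_of_nonneg hμ.1 hμ.summable, hμ.tsum_eq', ENNReal.ofReal_one]

lemma tsum_shift (f : G → ℝ≥0∞) (x : G) : ∑' z, f (x⁻¹ * z) = ∑' w, f w := by
  exact ((Equiv.mulLeft x).tsum_eq fun z => f (x⁻¹ * z)).symm.trans
    (tsum_congr fun w => by simp)

lemma isProb_conv {μ ν : G → ℝ} (hμ : IsProb μ) (hν : IsProb ν) : IsProb (conv μ ν) := by
  have key : ∑' z, ENNReal.ofReal (conv μ ν z) = 1 := by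
    calc ∑' z, ENNReal.ofReal (conv μ ν z)
        = ∑' z, ∑' x, ENNReal.ofReal (μ x) * ENNReal.ofReal (ν (x⁻¹ * z)) :=
          tsum_congr fun z => ofReal_conv hμ hν z
      _ = ∑' x, ∑' z, ENNReal.ofReal (μ x) * ENNReal.ofReal (ν (x⁻¹ * z)) := ENNReal.tsum_comm
      _ = ∑' x, ENNReal.ofReal (μ x) * ∑' z, ENNReal.ofReal (ν (x⁻¹ * z)) :=
          tsum_congr fun x => ENNReal.tsum_mul_left
      _ = ∑' x, ENNReal.ofReal (μ x) * 1 := by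
          refine tsum_congr fun x => ?_
          rw [tsum_shift (fun w => ENNReal.ofReal (ν w)) x, tsum_ofReal_eq_one hν]
      _ = 1 := by simp [tsum_ofReal_eq_one hμ]
  have hne : ∑' z, ENNReal.ofReal (conv μ ν z) ≠ ⊤ := by rw [key]; exact ENNReal.one_ne_top
  have hsum : Summable (conv μ ν) := by
    have := ENNReal.summable_toReal hne
    exact this.congr fun z => ENNReal.toReal_ofReal (conv_nonneg' hμ hν z)
  refine ⟨conv_nonneg' hμ hν, ?_⟩
  have : ∑' z, conv μ ν z = 1 := by
    have h2 : ∑' z, conv μ ν z = (∑' z, ENNReal.ofReal (conv μ ν z)).toReal := by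
      rw [ENNReal.tsum_toReal_eq (fun a => ENNReal.ofReal_ne_top)]
      exact tsum_congr fun z => (ENNReal.toReal_ofReal (conv_nonneg' hμ hν z)).symm
    rw [h2, key]; simp
  rw [← this]
  exact hsum.hasSum

end convsec

section tails
variable {G : Type*} [Group G] [Countable G]

lemma conv_le_one {μ ν : G → ℝ} (hμ : IsProb μ) (hν : IsProb ν) (z : G) :
    conv μ ν z ≤ 1 := (isProb_conv hμ hν).le_one z

/-- ENNReal tail bound for the mass of a convolution. -/
lemma conv_tail_mass {μ ν : G → ℝ} (hμ : IsProb μ) (hν : IsProb ν)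
    (K K' L : Finset G) (hL : ∀ x ∈ K, ∀ w ∈ K', x * w ∈ L) :
    ∑' z, ((↑L : Set G)ᶜ).indicator (fun z => ENNReal.ofReal (conv μ ν z)) z
      ≤ (∑' x, ((↑K : Set G)ᶜ).indicator (fun y => ENNReal.ofReal (μ y)) x)
        + (∑' w, ((↑K' : Set G)ᶜ).indicator (fun y => ENNReal.ofReal (ν y)) w) := by
  set Mμ : G → ℝ≥0∞ := fun y => ENNReal.ofReal (μ y) with hMμ
  set Mν : G → ℝ≥0∞ := fun y => ENNReal.ofReal (ν y) with hMν
  have step1 : ∀ z, ((↑L : Set G)ᶜ).indicator (fun z => ENNReal.ofReal (conv μ ν z)) z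
      = ∑' x, ((↑L : Set G)ᶜ).indicator (fun z => Mμ x * Mν (x⁻¹ * z)) z := by
    intro z
    by_cases hz : z ∈ ((↑L : Set G)ᶜ)
    · rw [Set.indicator_of_mem hz, ofReal_conv hμ hν z]
      exact tsum_congr fun x => by rw [Set.indicator_of_mem hz]
    · rw [Set.indicator_of_notMem hz]
      symm
      simp only [Set.indicator_of_notMem hz]
      exact tsum_zero
  calc ∑' z, ((↑L : Set G)ᶜ).indicator (fun z => ENNReal.ofReal (conv μ ν z)) z
      = ∑' z, ∑' x, ((↑L : Set G)ᶜ).indicator (fun z => Mμ x * Mν (x⁻¹ * z)) z :=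
        tsum_congr step1
    _ = ∑' x, ∑' z, ((↑L : Set G)ᶜ).indicator (fun z => Mμ x * Mν (x⁻¹ * z)) z :=
        ENNReal.tsum_comm
    _ ≤ ∑' x, ∑' z, (((↑K : Set G)ᶜ).indicator Mμ x * Mν (x⁻¹ * z)
          + Mμ x * ((↑K' : Set G)ᶜ).indicator Mν (x⁻¹ * z)) := by
        refine ENNReal.tsum_le_tsum fun x => ENNReal.tsum_le_tsum fun z => ?_
        by_cases hz : z ∈ ((↑L : Set G)ᶜ)
        · rw [Set.indicator_of_mem hz]
          by_cases hx : x ∈ K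
          · have hw : x⁻¹ * z ∈ ((↑K' : Set G)ᶜ) := by
              intro hmem
              exact hz (by simpa using hL x hx _ hmem)
            rw [Set.indicator_of_mem hw]
            exact le_add_left (le_refl _)
          · rw [Set.indicator_of_mem (by simpa using hx)]
            exact le_add_right (le_refl _)
        · rw [Set.indicator_of_notMem hz]
          exact zero_le
    _ = (∑' x, ((↑K : Set G)ᶜ).indicator Mμ x) + ∑' w, ((↑K' : Set G)ᶜ).indicator Mν w := by
        rw [tsum_congr (fun x => ENNReal.tsum_add
          (f := fun z => ((↑K : Set G)ᶜ).indicator Mμ x * Mν (x⁻¹ * z))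
          (g := fun z => Mμ x * ((↑K' : Set G)ᶜ).indicator Mν (x⁻¹ * z))), ENNReal.tsum_add]
        congr 1
        · calc ∑' x, ∑' z, ((↑K : Set G)ᶜ).indicator Mμ x * Mν (x⁻¹ * z)
              = ∑' x, ((↑K : Set G)ᶜ).indicator Mμ x * ∑' z, Mν (x⁻¹ * z) :=
                tsum_congr fun x => ENNReal.tsum_mul_left
            _ = ∑' x, ((↑K : Set G)ᶜ).indicator Mμ x := by
                refine tsum_congr fun x => ?_
                rw [tsum_shift Mν x, hMν, tsum_ofReal_eq_one hν, mul_one]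
        · calc ∑' x, ∑' z, Mμ x * ((↑K' : Set G)ᶜ).indicator Mν (x⁻¹ * z)
              = ∑' x, Mμ x * ∑' z, ((↑K' : Set G)ᶜ).indicator Mν (x⁻¹ * z) :=
                tsum_congr fun x => ENNReal.tsum_mul_left
            _ = ∑' x, Mμ x * ∑' w, ((↑K' : Set G)ᶜ).indicator Mν w :=
                tsum_congr fun x => by rw [tsum_shift (((↑K' : Set G)ᶜ).indicator Mν) x]
            _ = (∑' x, Mμ x) * ∑' w, ((↑K' : Set G)ᶜ).indicator Mν w := ENNReal.tsum_mul_right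
            _ = ∑' w, ((↑K' : Set G)ᶜ).indicator Mν w := by
                rw [hMμ, tsum_ofReal_eq_one hμ, one_mul]

end tails

lemma negMulLog_le_one {t : ℝ} (h0 : 0 ≤ t) (h1 : t ≤ 1) : negMulLog t ≤ 1 := by
  rcases eq_or_lt_of_le h0 with h | h
  · simp [← h]
  · have hlog : Real.log t⁻¹ ≤ t⁻¹ - 1 := Real.log_le_sub_one_of_pos (by positivity)
    have ht : negMulLog t = t * Real.log t⁻¹ := by
      rw [Real.negMulLog, Real.log_inv]; ring
    rw [ht]
    calc t * Real.log t⁻¹ ≤ t * (t⁻¹ - 1) := mul_le_mul_of_nonneg_left hlog h0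
      _ = 1 - t := by field_simp
      _ ≤ 1 := by linarith

section ent
variable {G : Type*} [Group G] [Countable G]

/-- subadditivity of negMulLog over a countable sum (in ENNReal). -/
lemma ofReal_negMulLog_tsum_le {a : G → ℝ} (h0 : ∀ x, 0 ≤ a x) (hs : Summable a)
    (h1 : ∑' x, a x ≤ 1) :
    ENNReal.ofReal (negMulLog (∑' x, a x)) ≤ ∑' x, ENNReal.ofReal (negMulLog (a x)) := by
  set S := ∑' x, a x with hS
  have hS0 : 0 ≤ S := tsum_nonneg h0
  have hlogS : 0 ≤ -Real.log S := by
    rcases eq_or_lt_of_le hS0 with h | h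
    · simp [← h]
    · have := Real.log_nonpos hS0 h1
      linarith
  have heq : negMulLog S = ∑' x, a x * (-Real.log S) := by
    rw [tsum_mul_right (a := -Real.log S), ← hS]
    rw [Real.negMulLog]; ring
  rw [heq, ENNReal.ofReal_tsum_of_nonneg (fun x => mul_nonneg (h0 x) hlogS)
    (hs.mul_right _)]
  refine ENNReal.tsum_le_tsum fun x => ENNReal.ofReal_le_ofReal ?_
  rcases eq_or_lt_of_le (h0 x) with h | h
  · rw [← h]; simp
  · have hax : a x ≤ S := Summable.le_tsum hs x (fun y _ => h0 y)
    have : -Real.log S ≤ -Real.log (a x) := by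
      have := Real.log_le_log h hax
      linarith
    calc a x * (-Real.log S) ≤ a x * (-Real.log (a x)) :=
          mul_le_mul_of_nonneg_left this h.le
      _ = negMulLog (a x) := by rw [Real.negMulLog]; ring

/-- ENNReal tail bound for the entropy of a convolution. -/
lemma conv_tail_ent {μ ν : G → ℝ} (hμ : IsProb μ) (hν : IsProb ν)
    (Ka K K' L : Finset G) (hKa : Ka ⊆ K) (hL : ∀ x ∈ K, ∀ w ∈ K', x * w ∈ L) :
    ∑' z, ((↑L : Set G)ᶜ).indicator (fun z => ENNReal.ofReal (negMulLog (conv μ ν z))) z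
      ≤ (∑' x, ((↑Ka : Set G)ᶜ).indicator (fun y => ENNReal.ofReal (negMulLog (μ y))) x)
        + (Ka.card : ℝ≥0∞) * (∑' w, ((↑K' : Set G)ᶜ).indicator (fun y => ENNReal.ofReal (ν y)) w)
        + ((∑' w, ((↑K' : Set G)ᶜ).indicator (fun y => ENNReal.ofReal (negMulLog (ν y))) w)
        + (K'.card : ℝ≥0∞) * (∑' x, ((↑K : Set G)ᶜ).indicator (fun y => ENNReal.ofReal (μ y)) x)) := by
  set Mμ : G → ℝ≥0∞ := fun y => ENNReal.ofReal (μ y) with hMμ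
  set Mν : G → ℝ≥0∞ := fun y => ENNReal.ofReal (ν y) with hMν
  set Eμ : G → ℝ≥0∞ := fun y => ENNReal.ofReal (negMulLog (μ y)) with hEμ
  set Eν : G → ℝ≥0∞ := fun y => ENNReal.ofReal (negMulLog (ν y)) with hEν
  have hEμ1 : ∀ x, Eμ x ≤ 1 := fun x => by
    rw [hEμ]; simpa using ENNReal.ofReal_le_ofReal (negMulLog_le_one (hμ.1 x) (hμ.le_one x))
  have hEν1 : ∀ x, Eν x ≤ 1 := fun x => by
    rw [hEν]; simpa using ENNReal.ofReal_le_ofReal (negMulLog_le_one (hν.1 x) (hν.le_one x))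
  -- pointwise subadditivity
  have point : ∀ z, ENNReal.ofReal (negMulLog (conv μ ν z))
      ≤ ∑' x, (Eμ x * Mν (x⁻¹ * z) + Mμ x * Eν (x⁻¹ * z)) := by
    intro z
    have h1 : ENNReal.ofReal (negMulLog (conv μ ν z))
        ≤ ∑' x, ENNReal.ofReal (negMulLog (μ x * ν (x⁻¹ * z))) := by
      have := ofReal_negMulLog_tsum_le (a := fun x => μ x * ν (x⁻¹ * z))
        (fun x => mul_nonneg (hμ.1 x) (hν.1 _)) (summable_conv_term hμ hν z)
        (by rw [← conv]; exact conv_le_one hμ hν z)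
      exact this
    refine le_trans h1 (ENNReal.tsum_le_tsum fun x => ?_)
    rw [Real.negMulLog_mul, ENNReal.ofReal_add
      (mul_nonneg (hν.1 _) (Real.negMulLog_nonneg (hμ.1 x) (hμ.le_one x)))
      (mul_nonneg (hμ.1 x) (Real.negMulLog_nonneg (hν.1 _) (hν.le_one _)))]
    rw [ENNReal.ofReal_mul (hν.1 _), ENNReal.ofReal_mul (hμ.1 x)]
    rw [mul_comm (Mν (x⁻¹ * z)) (Eμ x)]
  -- main chain
  calc ∑' z, ((↑L : Set G)ᶜ).indicator (fun z => ENNReal.ofReal (negMulLog (conv μ ν z))) z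
      ≤ ∑' z, ((↑L : Set G)ᶜ).indicator
          (fun z => ∑' x, (Eμ x * Mν (x⁻¹ * z) + Mμ x * Eν (x⁻¹ * z))) z := by
        refine ENNReal.tsum_le_tsum fun z => ?_
        by_cases hz : z ∈ ((↑L : Set G)ᶜ)
        · rw [Set.indicator_of_mem hz, Set.indicator_of_mem hz]; exact point z
        · rw [Set.indicator_of_notMem hz, Set.indicator_of_notMem hz]
    _ = ∑' z, ∑' x, ((↑L : Set G)ᶜ).indicator
          (fun z => Eμ x * Mν (x⁻¹ * z) + Mμ x * Eν (x⁻¹ * z)) z := by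
        refine tsum_congr fun z => ?_
        by_cases hz : z ∈ ((↑L : Set G)ᶜ)
        · rw [Set.indicator_of_mem hz]
          exact tsum_congr fun x =>
            (Set.indicator_of_mem hz (fun z => Eμ x * Mν (x⁻¹ * z) + Mμ x * Eν (x⁻¹ * z))).symm
        · rw [Set.indicator_of_notMem hz]
          symm
          simp only [Set.indicator_of_notMem hz]
          exact tsum_zero
    _ = ∑' x, ∑' z, ((↑L : Set G)ᶜ).indicator
          (fun z => Eμ x * Mν (x⁻¹ * z) + Mμ x * Eν (x⁻¹ * z)) z := ENNReal.tsum_comm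
    _ = ∑' x, ∑' z, (((↑L : Set G)ᶜ).indicator (fun z => Eμ x * Mν (x⁻¹ * z)) z
          + ((↑L : Set G)ᶜ).indicator (fun z => Mμ x * Eν (x⁻¹ * z)) z) := by
        refine tsum_congr fun x => tsum_congr fun z => ?_
        by_cases hz : z ∈ ((↑L : Set G)ᶜ) <;> simp [Set.indicator_of_mem, Set.indicator_of_notMem, hz]
    _ = ∑' x, ((∑' z, ((↑L : Set G)ᶜ).indicator (fun z => Eμ x * Mν (x⁻¹ * z)) z)
          + ∑' z, ((↑L : Set G)ᶜ).indicator (fun z => Mμ x * Eν (x⁻¹ * z)) z) :=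
        tsum_congr fun x => ENNReal.tsum_add
    _ = (∑' x, ∑' z, ((↑L : Set G)ᶜ).indicator (fun z => Eμ x * Mν (x⁻¹ * z)) z)
          + ∑' x, ∑' z, ((↑L : Set G)ᶜ).indicator (fun z => Mμ x * Eν (x⁻¹ * z)) z :=
        ENNReal.tsum_add
    _ ≤ ((∑' x, ((↑Ka : Set G)ᶜ).indicator Eμ x)
          + (Ka.card : ℝ≥0∞) * (∑' w, ((↑K' : Set G)ᶜ).indicator Mν w))
        + ((∑' w, ((↑K' : Set G)ᶜ).indicator Eν w)
          + (K'.card : ℝ≥0∞) * (∑' x, ((↑K : Set G)ᶜ).indicator Mμ x)) := by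
        gcongr ?_ + ?_
        · -- Term 1
          set tMν := ∑' w, ((↑K' : Set G)ᶜ).indicator Mν w with htMν
          have hIdef : ∀ x : G, ∑' z, ((↑L : Set G)ᶜ).indicator (fun z => Eμ x * Mν (x⁻¹ * z)) z
              = Eμ x * ∑' z, ((↑L : Set G)ᶜ).indicator (fun z => Mν (x⁻¹ * z)) z := by
            intro x
            rw [← ENNReal.tsum_mul_left]
            refine tsum_congr fun z => ?_
            by_cases hz : z ∈ ((↑L : Set G)ᶜ) <;>
              simp [Set.indicator_of_mem, Set.indicator_of_notMem, hz]
          have hI1 : ∀ x : G, ∑' z, ((↑L : Set G)ᶜ).indicator (fun z => Mν (x⁻¹ * z)) z ≤ 1 := by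
            intro x
            calc ∑' z, ((↑L : Set G)ᶜ).indicator (fun z => Mν (x⁻¹ * z)) z
                ≤ ∑' z, Mν (x⁻¹ * z) :=
                  ENNReal.tsum_le_tsum fun z => Set.indicator_le_self _ _ z
              _ = 1 := by rw [tsum_shift Mν x, hMν, tsum_ofReal_eq_one hν]
          have hIKa : ∀ x ∈ Ka, ∑' z, ((↑L : Set G)ᶜ).indicator (fun z => Mν (x⁻¹ * z)) z ≤ tMν := by
            intro x hx
            rw [← (Equiv.mulLeft x).tsum_eq
              (fun z => ((↑L : Set G)ᶜ).indicator (fun z => Mν (x⁻¹ * z)) z)]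
            refine ENNReal.tsum_le_tsum fun w => ?_
            by_cases hw : w ∈ K'
            · have hmem : (Equiv.mulLeft x) w ∈ (↑L : Set G) := by
                simpa using hL x (hKa hx) w hw
              rw [Set.indicator_of_notMem (by simpa using hmem)]
              exact zero_le
            · rw [Set.indicator_of_mem (show w ∈ ((↑K' : Set G)ᶜ) by simpa using hw)]
              calc ((↑L : Set G)ᶜ).indicator (fun z => Mν (x⁻¹ * z)) ((Equiv.mulLeft x) w)
                  ≤ Mν (x⁻¹ * ((Equiv.mulLeft x) w)) := Set.indicator_le_self _ _ _
                _ = Mν w := by simp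
          calc ∑' x, ∑' z, ((↑L : Set G)ᶜ).indicator (fun z => Eμ x * Mν (x⁻¹ * z)) z
              = ∑' x, Eμ x * ∑' z, ((↑L : Set G)ᶜ).indicator (fun z => Mν (x⁻¹ * z)) z :=
                tsum_congr hIdef
            _ ≤ ∑' x, (((↑Ka : Set G)ᶜ).indicator Eμ x
                  + (↑Ka : Set G).indicator (fun _ => tMν) x) := by
                refine ENNReal.tsum_le_tsum fun x => ?_
                by_cases hx : x ∈ Ka
                · rw [Set.indicator_of_notMem (by simpa using hx),
                    Set.indicator_of_mem (by simpa using hx)]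
                  calc Eμ x * ∑' z, ((↑L : Set G)ᶜ).indicator (fun z => Mν (x⁻¹ * z)) z
                      ≤ 1 * tMν := mul_le_mul' (hEμ1 x) (hIKa x hx)
                    _ = 0 + tMν := by rw [one_mul, zero_add]
                · rw [Set.indicator_of_mem (by simpa using hx),
                    Set.indicator_of_notMem (by simpa using hx)]
                  calc Eμ x * ∑' z, ((↑L : Set G)ᶜ).indicator (fun z => Mν (x⁻¹ * z)) z
                      ≤ Eμ x * 1 := mul_le_mul' (le_refl _) (hI1 x)
                    _ = Eμ x + 0 := by rw [mul_one, add_zero]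
            _ = (∑' x, ((↑Ka : Set G)ᶜ).indicator Eμ x)
                  + ∑' x, (↑Ka : Set G).indicator (fun _ => tMν) x := ENNReal.tsum_add
            _ = (∑' x, ((↑Ka : Set G)ᶜ).indicator Eμ x) + (Ka.card : ℝ≥0∞) * tMν := by
                congr 1
                rw [tsum_eq_sum (s := Ka)
                  (fun b hb => Set.indicator_of_notMem (by simpa using hb) _)]
                rw [Finset.sum_congr rfl (fun b hb => Set.indicator_of_mem (by simpa using hb) _)]
                rw [Finset.sum_const, nsmul_eq_mul]
        · -- Term 2
          set tEν := ∑' w, ((↑K' : Set G)ᶜ).indicator Eν w with htEν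
          set tMμ := ∑' x, ((↑K : Set G)ᶜ).indicator Mμ x with htMμ
          have hIdef : ∀ x : G, ∑' z, ((↑L : Set G)ᶜ).indicator (fun z => Mμ x * Eν (x⁻¹ * z)) z
              = Mμ x * ∑' z, ((↑L : Set G)ᶜ).indicator (fun z => Eν (x⁻¹ * z)) z := by
            intro x
            rw [← ENNReal.tsum_mul_left]
            refine tsum_congr fun z => ?_
            by_cases hz : z ∈ ((↑L : Set G)ᶜ) <;>
              simp [Set.indicator_of_mem, Set.indicator_of_notMem, hz]
          have hI2 : ∀ x : G, ∑' z, ((↑L : Set G)ᶜ).indicator (fun z => Eν (x⁻¹ * z)) z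
              ≤ tEν + ((↑K : Set G)ᶜ).indicator (fun _ => (K'.card : ℝ≥0∞)) x := by
            intro x
            rw [← (Equiv.mulLeft x).tsum_eq
              (fun z => ((↑L : Set G)ᶜ).indicator (fun z => Eν (x⁻¹ * z)) z)]
            by_cases hx : x ∈ K
            · rw [Set.indicator_of_notMem (by simpa using hx), add_zero, htEν]
              refine ENNReal.tsum_le_tsum fun w => ?_
              by_cases hw : w ∈ K'
              · have hmem : (Equiv.mulLeft x) w ∈ (↑L : Set G) := by
                  simpa using hL x hx w hw
                rw [Set.indicator_of_notMem (by simpa using hmem)]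
                exact zero_le
              · rw [Set.indicator_of_mem (show w ∈ ((↑K' : Set G)ᶜ) by simpa using hw)]
                calc ((↑L : Set G)ᶜ).indicator (fun z => Eν (x⁻¹ * z)) ((Equiv.mulLeft x) w)
                    ≤ Eν (x⁻¹ * ((Equiv.mulLeft x) w)) := Set.indicator_le_self _ _ _
                  _ = Eν w := by simp
            · rw [Set.indicator_of_mem (by simpa using hx)]
              calc ∑' w, ((↑L : Set G)ᶜ).indicator (fun z => Eν (x⁻¹ * z)) ((Equiv.mulLeft x) w)
                  ≤ ∑' w, (((↑K' : Set G)ᶜ).indicator Eν w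
                      + (↑K' : Set G).indicator (fun _ => (1 : ℝ≥0∞)) w) := by
                    refine ENNReal.tsum_le_tsum fun w => ?_
                    have hbase : ((↑L : Set G)ᶜ).indicator (fun z => Eν (x⁻¹ * z))
                        ((Equiv.mulLeft x) w) ≤ Eν w := by
                      calc ((↑L : Set G)ᶜ).indicator (fun z => Eν (x⁻¹ * z)) ((Equiv.mulLeft x) w)
                          ≤ Eν (x⁻¹ * ((Equiv.mulLeft x) w)) := Set.indicator_le_self _ _ _
                        _ = Eν w := by simp
                    by_cases hw : w ∈ K'
                    · have h2 : (↑K' : Set G).indicator (fun _ => (1 : ℝ≥0∞)) w = 1 :=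
                        Set.indicator_of_mem (by simpa using hw) _
                      rw [h2]
                      exact le_add_left (hbase.trans (hEν1 _))
                    · have h2 : ((↑K' : Set G)ᶜ).indicator Eν w = Eν w :=
                        Set.indicator_of_mem (show w ∈ ((↑K' : Set G)ᶜ) by simpa using hw) _
                      rw [h2]
                      exact le_add_right hbase
                _ = tEν + (K'.card : ℝ≥0∞) := by
                    rw [ENNReal.tsum_add, htEν]
                    congr 1
                    rw [tsum_eq_sum (s := K')
                      (fun b hb => Set.indicator_of_notMem (by simpa using hb) _)]
                    rw [Finset.sum_congr rfl
                      (fun b hb => Set.indicator_of_mem (by simpa using hb) _)]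
                    rw [Finset.sum_const, nsmul_eq_mul, mul_one]
          calc ∑' x, ∑' z, ((↑L : Set G)ᶜ).indicator (fun z => Mμ x * Eν (x⁻¹ * z)) z
              = ∑' x, Mμ x * ∑' z, ((↑L : Set G)ᶜ).indicator (fun z => Eν (x⁻¹ * z)) z :=
                tsum_congr hIdef
            _ ≤ ∑' x, (Mμ x * tEν
                  + ((↑K : Set G)ᶜ).indicator Mμ x * (K'.card : ℝ≥0∞)) := by
                refine ENNReal.tsum_le_tsum fun x => ?_
                by_cases hx : x ∈ K
                · calc Mμ x * ∑' z, ((↑L : Set G)ᶜ).indicator (fun z => Eν (x⁻¹ * z)) z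
                      ≤ Mμ x * (tEν + ((↑K : Set G)ᶜ).indicator (fun _ => (K'.card : ℝ≥0∞)) x) :=
                        mul_le_mul' (le_refl _) (hI2 x)
                    _ = Mμ x * tEν := by
                        rw [Set.indicator_of_notMem (by simpa using hx), add_zero]
                    _ ≤ _ := le_add_right (le_refl _)
                · calc Mμ x * ∑' z, ((↑L : Set G)ᶜ).indicator (fun z => Eν (x⁻¹ * z)) z
                      ≤ Mμ x * (tEν + ((↑K : Set G)ᶜ).indicator (fun _ => (K'.card : ℝ≥0∞)) x) :=
                        mul_le_mul' (le_refl _) (hI2 x)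
                    _ = Mμ x * tEν + Mμ x * (K'.card : ℝ≥0∞) := by
                        rw [Set.indicator_of_mem (by simpa using hx), mul_add]
                    _ = Mμ x * tEν + ((↑K : Set G)ᶜ).indicator Mμ x * (K'.card : ℝ≥0∞) := by
                        rw [Set.indicator_of_mem (show x ∈ ((↑K : Set G)ᶜ) by simpa using hx)]
            _ = (∑' x, Mμ x * tEν) + ∑' x, ((↑K : Set G)ᶜ).indicator Mμ x * (K'.card : ℝ≥0∞) :=
                ENNReal.tsum_add
            _ = tEν + (K'.card : ℝ≥0∞) * tMμ := by
                rw [ENNReal.tsum_mul_right, ENNReal.tsum_mul_right, hMμ,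
                  tsum_ofReal_eq_one hμ, one_mul, ← hMμ, ← htMμ, mul_comm]

end ent

section degenerate
variable {G : Type*} [Group G] [Countable G]

lemma negMulLog_monotoneOn : MonotoneOn negMulLog (Set.Icc 0 (Real.exp (-1))) := by
  refine monotoneOn_of_deriv_nonneg (convex_Icc _ _) continuous_negMulLog.continuousOn ?_ ?_
  · rw [interior_Icc]
    exact differentiableOn_negMulLog.mono (fun x hx => ne_of_gt hx.1)
  · rw [interior_Icc]
    intro x hx
    rw [Real.deriv_negMulLog (ne_of_gt hx.1)]
    have hlog : Real.log x ≤ -1 := by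
      have := Real.log_le_log hx.1 hx.2.le
      simpa [Real.log_exp] using this
    linarith

lemma not_summable_of_le {f g : G → ℝ} (σ : G ≃ G) {c : ℝ}
    (hc0 : 0 < c) (hc1 : c ≤ 1)
    (hf0 : ∀ z, 0 ≤ f z) (hf1 : ∀ z, f z ≤ 1) (hfs : Summable f)
    (hg0 : ∀ z, 0 ≤ g z) (hg1 : ∀ z, g z ≤ 1)
    (hle : ∀ z, c * g (σ z) ≤ f z)
    (hg : ¬ Summable (fun z => negMulLog (g z))) :
    ¬ Summable (fun z => negMulLog (f z)) := by
  intro hF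
  apply hg
  set A := {z | f z < Real.exp (-1)} with hA
  have hmem : A ∈ Filter.cofinite :=
    hfs.tendsto_cofinite_zero (Iio_mem_nhds (Real.exp_pos _))
  have hfin : Aᶜ.Finite := Filter.mem_cofinite.mp hmem
  have key : ∀ z ∈ A, c * negMulLog (g (σ z)) ≤ negMulLog (f z) := by
    intro z hz
    rcases eq_or_lt_of_le (hg0 (σ z)) with h | h
    · rw [← h]; simp [Real.negMulLog_nonneg (hf0 z) (hf1 z)]
    · have hct : c * g (σ z) ≤ f z := hle z
      have h1 : c * negMulLog (g (σ z)) ≤ negMulLog (c * g (σ z)) := by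
        rw [Real.negMulLog_mul]
        have : 0 ≤ g (σ z) * negMulLog c :=
          mul_nonneg (hg0 _) (Real.negMulLog_nonneg hc0.le hc1)
        linarith
      refine h1.trans ?_
      have hfe : f z ∈ Set.Icc (0:ℝ) (Real.exp (-1)) := ⟨hf0 z, hz.le⟩
      have hcte : c * g (σ z) ∈ Set.Icc (0:ℝ) (Real.exp (-1)) :=
        ⟨mul_nonneg hc0.le (hg0 _), hct.trans hfe.2⟩
      exact negMulLog_monotoneOn hcte hfe hct
  have hsum1 : Summable (A.indicator (fun z => c * negMulLog (g (σ z)))) := by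
    refine Summable.of_nonneg_of_le
      (fun z => Set.indicator_apply_nonneg fun _ =>
        mul_nonneg hc0.le (Real.negMulLog_nonneg (hg0 _) (hg1 _)))
      (fun z => ?_) hF
    by_cases hz : z ∈ A
    · rw [Set.indicator_of_mem hz]; exact key z hz
    · rw [Set.indicator_of_notMem hz]
      exact Real.negMulLog_nonneg (hf0 z) (hf1 z)
  have hsum2 : Summable (Aᶜ.indicator (fun z => c * negMulLog (g (σ z)))) := by
    refine summable_of_ne_finset_zero (s := hfin.toFinset) fun b hb => ?_
    rw [Set.indicator_of_notMem (by simpa [Set.Finite.mem_toFinset] using hb)]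
  have hsum : Summable (fun z => c * negMulLog (g (σ z))) := by
    have := hsum1.add hsum2
    refine this.congr fun z => ?_
    exact congrFun (A.indicator_self_add_compl (fun z => c * negMulLog (g (σ z)))) z
  have hsumg : Summable (fun z => negMulLog (g (σ z))) :=
    (summable_mul_left_iff (ne_of_gt hc0)).mp hsum
  exact (σ.summable_iff (f := fun z => negMulLog (g z))).mp hsumg

lemma exists_pos {μ : G → ℝ} (hμ : IsProb μ) : ∃ x, 0 < μ x := by
  by_contra h
  push_neg at h
  have hz : ∀ x, μ x = 0 := fun x => le_antisymm (h x) (hμ.1 x)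
  have h1 := hμ.tsum_eq'
  rw [tsum_congr hz, tsum_zero] at h1
  exact zero_ne_one h1

lemma not_summable_conv {μ ν : G → ℝ} (hμ : IsProb μ) (hν : IsProb ν)
    (h : ¬ Summable (fun x => negMulLog (μ x)) ∨ ¬ Summable (fun x => negMulLog (ν x))) :
    ¬ Summable (fun z => negMulLog (conv μ ν z)) := by
  have hconv := isProb_conv hμ hν
  rcases h with h | h
  · obtain ⟨w₀, hw₀⟩ := exists_pos hν
    refine not_summable_of_le (Equiv.mulRight w₀⁻¹) hw₀ (hν.le_one w₀)
      hconv.1 hconv.le_one hconv.summable hμ.1 hμ.le_one (fun z => ?_) h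
    have := Summable.le_tsum (summable_conv_term hμ hν z) (z * w₀⁻¹)
      (fun y _ => mul_nonneg (hμ.1 y) (hν.1 _))
    calc ν w₀ * μ ((Equiv.mulRight w₀⁻¹) z) = μ (z * w₀⁻¹) * ν ((z * w₀⁻¹)⁻¹ * z) := by
          simp [mul_comm]
      _ ≤ conv μ ν z := this
  · obtain ⟨x₀, hx₀⟩ := exists_pos hμ
    refine not_summable_of_le (Equiv.mulLeft x₀⁻¹) hx₀ (hμ.le_one x₀)
      hconv.1 hconv.le_one hconv.summable hν.1 hν.le_one (fun z => ?_) h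
    have := Summable.le_tsum (summable_conv_term hμ hν z) x₀
      (fun y _ => mul_nonneg (hμ.1 y) (hν.1 _))
    exact this

lemma not_summable_indicator_compl {f : G → ℝ} (L : Finset G) (h : ¬ Summable f) :
    ¬ Summable (fun z => ((↑L : Set G)ᶜ).indicator f z) := by
  intro hs
  apply h
  have h2 : Summable ((↑L : Set G).indicator f) :=
    summable_of_ne_finset_zero (s := L)
      (fun b hb => Set.indicator_of_notMem (by simpa using hb) _)
  have := hs.add h2
  refine this.congr fun z => ?_
  exact congrFun (Set.indicator_compl_add_self (↑L : Set G) f) z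

end degenerate

section step
variable {G : Type*} [Group G] [Countable G] [DecidableEq G] {ι κ : Type*}

lemma step_tight {μ : ι → G → ℝ} {ν : κ → G → ℝ}
    (hμp : ∀ i, IsProb (μ i)) (hνp : ∀ k, IsProb (ν k))
    (hμt : Tight μ) (hνt : Tight ν) :
    Tight (fun p : ι × κ => conv (μ p.1) (ν p.2)) := by
  intro ε hε
  obtain ⟨K, hK⟩ := hμt (ε/3) (by linarith)
  obtain ⟨K', hK'⟩ := hνt (ε/3) (by linarith)
  refine ⟨Finset.image (fun p : G × G => p.1 * p.2) (K ×ˢ K'), fun p => ?_⟩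
  set L := Finset.image (fun p : G × G => p.1 * p.2) (K ×ˢ K') with hLdef
  have hL : ∀ x ∈ K, ∀ w ∈ K', x * w ∈ L := fun x hx w hw =>
    show x * w ∈ Finset.image (fun p : G × G => p.1 * p.2) (K ×ˢ K') from
      Finset.mem_image.mpr ⟨(x, w), Finset.mem_product.mpr ⟨hx, hw⟩, rfl⟩
  refine real_tail_lt (conv_nonneg' (hμp p.1) (hνp p.2)) ?_
  calc ∑' z, ((↑L : Set G)ᶜ).indicator (fun z => ENNReal.ofReal (conv (μ p.1) (ν p.2) z)) z
      ≤ (∑' x, ((↑K : Set G)ᶜ).indicator (fun y => ENNReal.ofReal (μ p.1 y)) x)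
        + (∑' w, ((↑K' : Set G)ᶜ).indicator (fun y => ENNReal.ofReal (ν p.2 y)) w) :=
        conv_tail_mass (hμp p.1) (hνp p.2) K K' L hL
    _ = ENNReal.ofReal ((∑' x, ((↑K : Set G)ᶜ).indicator (μ p.1) x)
        + ∑' w, ((↑K' : Set G)ᶜ).indicator (ν p.2) w) := by
        rw [tailE_eq (hμp p.1).1 (hμp p.1).summable, tailE_eq (hνp p.2).1 (hνp p.2).summable,
          ENNReal.ofReal_add (tsum_nonneg fun x => Set.indicator_apply_nonneg fun _ => (hμp p.1).1 x)
            (tsum_nonneg fun w => Set.indicator_apply_nonneg fun _ => (hνp p.2).1 w)]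
    _ < ENNReal.ofReal ε := by
        rw [ENNReal.ofReal_lt_ofReal_iff hε]
        have h1 := hK p.1
        have h2 := hK' p.2
        linarith

lemma step_ent {μ : ι → G → ℝ} {ν : κ → G → ℝ}
    (hμp : ∀ i, IsProb (μ i)) (hνp : ∀ k, IsProb (ν k))
    (hμt : Tight μ) (hνt : Tight ν) (hμe : EntTight μ) (hνe : EntTight ν) :
    EntTight (fun p : ι × κ => conv (μ p.1) (ν p.2)) := by
  intro ε hε
  obtain ⟨Ka, hKa⟩ := hμe (ε/8) (by linarith)
  obtain ⟨Kb, hKb⟩ := hνe (ε/8) (by linarith)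
  have hδν : (0:ℝ) < ε/(8*(Ka.card+1)) := by positivity
  obtain ⟨Kc, hKc⟩ := hνt (ε/(8*(Ka.card+1))) hδν
  set K' := Kb ∪ Kc with hK'def
  have hδμ : (0:ℝ) < ε/(8*(K'.card+1)) := by positivity
  obtain ⟨K₃, hK₃⟩ := hμt (ε/(8*(K'.card+1))) hδμ
  set K := Ka ∪ K₃ with hKdef
  refine ⟨Finset.image (fun p : G × G => p.1 * p.2) (K ×ˢ K'), fun p => ?_⟩
  set L := Finset.image (fun p : G × G => p.1 * p.2) (K ×ˢ K') with hLdef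
  have hL : ∀ x ∈ K, ∀ w ∈ K', x * w ∈ L := fun x hx w hw =>
    show x * w ∈ Finset.image (fun p : G × G => p.1 * p.2) (K ×ˢ K') from
      Finset.mem_image.mpr ⟨(x, w), Finset.mem_product.mpr ⟨hx, hw⟩, rfl⟩
  have hμi := hμp p.1
  have hνk := hνp p.2
  by_cases hdeg : Summable (fun x => negMulLog (μ p.1 x)) ∧ Summable (fun x => negMulLog (ν p.2 x))
  · obtain ⟨hsμ, hsν⟩ := hdeg
    have hconv := isProb_conv hμi hνk
    refine real_tail_lt (fun z => Real.negMulLog_nonneg (hconv.1 z) (hconv.le_one z)) ?_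
    have hbound := conv_tail_ent hμi hνk Ka K K' L Finset.subset_union_left hL
    refine lt_of_le_of_lt hbound ?_
    -- bound the four terms
    have hT1 : ∑' x, ((↑Ka : Set G)ᶜ).indicator (fun y => ENNReal.ofReal (negMulLog (μ p.1 y))) x
        ≤ ENNReal.ofReal (ε/8) := by
      rw [tailE_eq (fun x => Real.negMulLog_nonneg (hμi.1 x) (hμi.le_one x)) hsμ]
      exact ENNReal.ofReal_le_ofReal (hKa p.1).le
    have hmono : ∀ (S T : Finset G) (f : G → ℝ≥0∞), S ⊆ T →
        (∑' x, ((↑T : Set G)ᶜ).indicator f x) ≤ ∑' x, ((↑S : Set G)ᶜ).indicator f x := by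
      intro S T f hST
      refine ENNReal.tsum_le_tsum fun x => ?_
      by_cases hx : x ∈ ((↑T : Set G)ᶜ)
      · rw [Set.indicator_of_mem hx, Set.indicator_of_mem
          (show x ∈ ((↑S : Set G)ᶜ) from fun hmem => hx (by
            try simp only [Finset.coe_union, Set.mem_union] at *
            exact hST (by simpa using hmem)))]
      · rw [Set.indicator_of_notMem hx]
        exact zero_le
    have hT2 : (Ka.card : ℝ≥0∞)
          * (∑' w, ((↑K' : Set G)ᶜ).indicator (fun y => ENNReal.ofReal (ν p.2 y)) w)
        ≤ ENNReal.ofReal (ε/8) := by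
      have h1 : (∑' w, ((↑K' : Set G)ᶜ).indicator (fun y => ENNReal.ofReal (ν p.2 y)) w)
          ≤ ENNReal.ofReal (ε/(8*(Ka.card+1))) := by
        refine le_trans (hmono Kc K' _ Finset.subset_union_right) ?_
        rw [tailE_eq hνk.1 hνk.summable]
        exact ENNReal.ofReal_le_ofReal (hKc p.2).le
      calc (Ka.card : ℝ≥0∞) * _ ≤ (Ka.card : ℝ≥0∞) * ENNReal.ofReal (ε/(8*(Ka.card+1))) :=
            mul_le_mul' (le_refl _) h1
        _ = ENNReal.ofReal ((Ka.card : ℝ) * (ε/(8*(Ka.card+1)))) := by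
            rw [ENNReal.ofReal_mul (by positivity), ENNReal.ofReal_natCast]
        _ ≤ ENNReal.ofReal (ε/8) := by
            refine ENNReal.ofReal_le_ofReal ?_
            rw [← mul_div_assoc, div_le_div_iff₀ (by positivity) (by norm_num)]
            nlinarith [Nat.cast_nonneg (α := ℝ) Ka.card, hε.le]
    have hT3 : ∑' w, ((↑K' : Set G)ᶜ).indicator (fun y => ENNReal.ofReal (negMulLog (ν p.2 y))) w
        ≤ ENNReal.ofReal (ε/8) := by
      refine le_trans (hmono Kb K' _ Finset.subset_union_left) ?_
      rw [tailE_eq (fun x => Real.negMulLog_nonneg (hνk.1 x) (hνk.le_one x)) hsν]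
      exact ENNReal.ofReal_le_ofReal (hKb p.2).le
    have hT4 : (K'.card : ℝ≥0∞)
          * (∑' x, ((↑K : Set G)ᶜ).indicator (fun y => ENNReal.ofReal (μ p.1 y)) x)
        ≤ ENNReal.ofReal (ε/8) := by
      have h1 : (∑' x, ((↑K : Set G)ᶜ).indicator (fun y => ENNReal.ofReal (μ p.1 y)) x)
          ≤ ENNReal.ofReal (ε/(8*(K'.card+1))) := by
        refine le_trans (hmono K₃ K _ Finset.subset_union_right) ?_
        rw [tailE_eq hμi.1 hμi.summable]
        exact ENNReal.ofReal_le_ofReal (hK₃ p.1).le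
      calc (K'.card : ℝ≥0∞) * _ ≤ (K'.card : ℝ≥0∞) * ENNReal.ofReal (ε/(8*(K'.card+1))) :=
            mul_le_mul' (le_refl _) h1
        _ = ENNReal.ofReal ((K'.card : ℝ) * (ε/(8*(K'.card+1)))) := by
            rw [ENNReal.ofReal_mul (by positivity), ENNReal.ofReal_natCast]
        _ ≤ ENNReal.ofReal (ε/8) := by
            refine ENNReal.ofReal_le_ofReal ?_
            rw [← mul_div_assoc, div_le_div_iff₀ (by positivity) (by norm_num)]
            nlinarith [Nat.cast_nonneg (α := ℝ) K'.card, hε.le]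
    calc _ ≤ (ENNReal.ofReal (ε/8) + ENNReal.ofReal (ε/8))
          + (ENNReal.ofReal (ε/8) + ENNReal.ofReal (ε/8)) :=
          add_le_add (add_le_add hT1 hT2) (add_le_add hT3 hT4)
      _ < ENNReal.ofReal ε := by
          have h8 : (0:ℝ) ≤ ε/8 := by linarith
          rw [← ENNReal.ofReal_add h8 h8]
          have h4 : (0:ℝ) ≤ ε/8 + ε/8 := by linarith
          rw [← ENNReal.ofReal_add h4 h4, ENNReal.ofReal_lt_ofReal_iff hε]
          linarith
  · have hns := not_summable_conv hμi hνk (by tauto)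
    have h2 := not_summable_indicator_compl L hns
    rw [tsum_eq_zero_of_not_summable h2]
    exact hε

end step


end aux

/-- If a family of probability measures on a countable group is tight and
entropy-tight, then for every fixed `n` the family of all `n`-fold convolutions
`μ_{i₁} * ⋯ * μ_{iₙ}` is also tight and entropy-tight. -/
theorem conv_tight_and_entTight {ι G : Type*} [Group G] [Countable G] [DecidableEq G]
    (μ : ι → G → ℝ) (hprob : ∀ i, IsProb (μ i))
    (ht : Tight μ) (he : EntTight μ) (n : ℕ) :
    Tight (fun l : Fin n → ι => convList (List.ofFn fun j => μ (l j))) ∧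
    EntTight (fun l : Fin n → ι => convList (List.ofFn fun j => μ (l j))) := by
  have main : ∀ m : ℕ, (∀ l : Fin m → ι, IsProb (convList (List.ofFn fun j => μ (l j)))) ∧
      Tight (fun l : Fin m → ι => convList (List.ofFn fun j => μ (l j))) ∧
      EntTight (fun l : Fin m → ι => convList (List.ofFn fun j => μ (l j))) := by
    intro m
    induction m with
    | zero =>
      have hdelta : ∀ l : Fin 0 → ι, convList (List.ofFn fun j => μ (l j))
          = fun g : G => if g = 1 then 1 else 0 := by
        intro l
        rw [List.ofFn_zero]
        rfl
      refine ⟨fun l => ?_, fun ε hε => ⟨{1}, fun l => ?_⟩, fun ε hε => ⟨{1}, fun l => ?_⟩⟩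
      · rw [hdelta l]
        exact ⟨fun x => by by_cases h : x = 1 <;> simp [h], hasSum_ite_eq 1 1⟩
      · have hgoal : ((fun l : Fin 0 → ι => convList (List.ofFn fun j => μ (l j))) l)
            = (fun g : G => if g = 1 then 1 else (0:ℝ)) := hdelta l
        rw [hgoal]
        have hzero : ∀ x : G, ((↑({1} : Finset G) : Set G)ᶜ).indicator
            (fun g : G => if g = 1 then 1 else (0:ℝ)) x = 0 := by
          intro x
          by_cases hx : x ∈ ((↑({1} : Finset G) : Set G)ᶜ)
          · rw [Set.indicator_of_mem hx]
            have : x ≠ 1 := by simpa using hx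
            simp [this]
          · rw [Set.indicator_of_notMem hx]
        rw [tsum_congr hzero, tsum_zero]
        exact hε
      · have hgoal : ((fun l : Fin 0 → ι => convList (List.ofFn fun j => μ (l j))) l)
            = (fun g : G => if g = 1 then 1 else (0:ℝ)) := hdelta l
        rw [hgoal]
        have hzero : ∀ x : G, ((↑({1} : Finset G) : Set G)ᶜ).indicator
            (fun y : G => negMulLog (if y = 1 then 1 else (0:ℝ))) x = 0 := by
          intro x
          by_cases hx : x ∈ ((↑({1} : Finset G) : Set G)ᶜ)
          · rw [Set.indicator_of_mem hx]
            have : x ≠ 1 := by simpa using hx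
            simp [this]
          · rw [Set.indicator_of_notMem hx]
        rw [tsum_congr hzero, tsum_zero]
        exact hε
    | succ m ih =>
      obtain ⟨ihp, iht, ihe⟩ := ih
      have heq : ∀ l : Fin (m+1) → ι, convList (List.ofFn fun j => μ (l j))
          = conv (μ (l 0)) (convList (List.ofFn fun j : Fin m => μ (l j.succ))) := by
        intro l
        rw [List.ofFn_succ]
        rfl
      refine ⟨fun l => ?_, ?_, ?_⟩
      · rw [heq l]
        exact isProb_conv (hprob _) (ihp _)
      · have hstep := step_tight hprob ihp ht iht
        intro ε hε
        obtain ⟨K, hK⟩ := hstep ε hε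
        refine ⟨K, fun l => ?_⟩
        have := hK (l 0, fun j => l j.succ)
        have hgoal : ((fun l : Fin (m+1) → ι => convList (List.ofFn fun j => μ (l j))) l)
            = conv (μ (l 0)) (convList (List.ofFn fun j : Fin m => μ (l j.succ))) := heq l
        rw [hgoal]
        exact this
      · have hstep := step_ent hprob ihp ht iht he ihe
        intro ε hε
        obtain ⟨K, hK⟩ := hstep ε hε
        refine ⟨K, fun l => ?_⟩
        have := hK (l 0, fun j => l j.succ)
        have hgoal : ((fun l : Fin (m+1) → ι => convList (List.ofFn fun j => μ (l j))) l)
            = conv (μ (l 0)) (convList (List.ofFn fun j : Fin m => μ (l j.succ))) := heq l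
        rw [hgoal]
        exact this
  exact ⟨(main n).2.1, (main n).2.2⟩
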